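/- If n ∈ O_FS, then n has at most two distinct prime factors. -/

import Mathlib

/-- `O_FS` : odd naturals `n ≥ 1` such that `(ℤ/nℤ)*` is covered by `{±2^j : j ≥ 0}`. -/
def OFS (n : ℕ) : Prop :=
  Odd n ∧ 1 ≤ n ∧ ∀ x : ℤ, IsCoprime x (n : ℤ) →
    ∃ j : ℕ, (n : ℤ) ∣ x - 2 ^ j ∨ (n : ℤ) ∣ x + 2 ^ j

lemma sqrt1_lower : ∀ n : ℕ, Odd n →
    2 ^ n.primeFactors.card ≤ Nat.card {x : ZMod n // x * x = 1} := by
  refine Nat.recOnPosPrimePosCoprime ?_ ?_ ?_ ?_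
  · intro p k hp hk hodd
    have hpp : p.Prime := hp
    have hoddp : Odd p := by
      rw [Nat.odd_iff] at hodd ⊢
      by_contra hne
      have h2 : 2 ∣ p := by omega
      have h2k : 2 ∣ p ^ k := h2.trans (dvd_pow_self p (by omega))
      omega
    have hp3 : 3 ≤ p := by
      have h2 := hpp.two_le
      have : p ≠ 2 := by rintro rfl; exact (by decide : ¬ Odd 2) hoddp
      omega
    have hlt : 2 < p ^ k := lt_of_lt_of_le (by omega) (Nat.le_self_pow (by omega) p)
    haveI : Fact (2 < p ^ k) := ⟨hlt⟩
    haveI : NeZero (p ^ k) := ⟨by positivity⟩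
    rw [Nat.primeFactors_prime_pow (by omega) hp, Finset.card_singleton, pow_one]
    have hne : ((-1 : ZMod (p ^ k))) ≠ 1 := ZMod.neg_one_ne_one
    haveI : Nontrivial {x : ZMod (p ^ k) // x * x = 1} :=
      ⟨⟨1, one_mul 1⟩, ⟨-1, by rw [neg_mul_neg, one_mul]⟩,
        fun h => hne ((congrArg Subtype.val h).symm)⟩
    exact Finite.one_lt_card_iff_nontrivial.mpr this
  · intro h; exact absurd h (by decide)
  · intro _
    simp
  · intro a b ha hb hab IHa IHb hodd
    have hoa : Odd a := (Nat.odd_mul.mp hodd).1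
    have hob : Odd b := (Nat.odd_mul.mp hodd).2
    have h1 := IHa hoa
    have h2 := IHb hob
    have c := ZMod.chineseRemainder hab
    have e1 : {x : ZMod (a * b) // x * x = 1} ≃
        {p : ZMod a × ZMod b // p * p = 1} :=
      c.toEquiv.subtypeEquiv (fun x => by
        show x * x = 1 ↔ c x * c x = 1
        constructor
        · intro h; rw [← map_mul, h, map_one]
        · intro h; apply c.injective; rw [map_mul, map_one, h])
    have e2 : {p : ZMod a × ZMod b // p * p = 1} ≃
        {y : ZMod a // y * y = 1} × {z : ZMod b // z * z = 1} :=
      (Equiv.subtypeEquivRight (fun p => by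
        rw [Prod.ext_iff]; rfl)).trans Equiv.subtypeProdEquivProd
    rw [Nat.card_congr (e1.trans e2), Nat.card_prod,
      Nat.primeFactors_mul (by omega) (by omega),
      Finset.card_union_of_disjoint (Nat.Coprime.disjoint_primeFactors hab), pow_add]
    exact Nat.mul_le_mul h1 h2

lemma OFS_sqrt_upper (n : ℕ) (hn : OFS n) :
    Nat.card {x : ZMod n // x * x = 1} ≤ 4 := by
  obtain ⟨hodd, hpos, hcov⟩ := hn
  haveI : NeZero n := ⟨by omega⟩
  set d := orderOf (2 : ZMod n) with hd
  set T : ZMod n := 2 ^ (d / 2) with hT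
  have key : ∀ x : ZMod n, x * x = 1 → x ∈ ({1, -1, T, -T} : Finset (ZMod n)) := by
    intro x hx
    have hxu : IsUnit x := IsUnit.of_mul_eq_one x hx
    have hco : Nat.Coprime (x.val) n := by
      have := ZMod.val_coe_unit_coprime hxu.unit
      rwa [IsUnit.unit_spec] at this
    obtain ⟨j, hj⟩ := hcov (x.val : ℤ) (Nat.isCoprime_iff_coprime.mpr hco)
    have hxval : ((x.val : ℕ) : ZMod n) = x := ZMod.natCast_rightInverse x
    have hx2 : x = 2 ^ j ∨ x = -(2 ^ j) := by
      rcases hj with h | h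
      · left
        have h0 := (ZMod.intCast_zmod_eq_zero_iff_dvd _ n).mpr h
        push_cast at h0
        rw [hxval] at h0
        linear_combination h0
      · right
        have h0 := (ZMod.intCast_zmod_eq_zero_iff_dvd _ n).mpr h
        push_cast at h0
        rw [hxval] at h0
        linear_combination h0
    have h2j : (2 : ZMod n) ^ (2 * j) = 1 := by
      rcases hx2 with h | h
      · rw [two_mul, pow_add, ← h, hx]
      · rw [two_mul, pow_add]
        calc (2 : ZMod n) ^ j * 2 ^ j = (-(2 ^ j)) * (-(2 ^ j)) := by ring
        _ = x * x := by rw [← h]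
        _ = 1 := hx
    have hdvd : d ∣ 2 * j := orderOf_dvd_of_pow_eq_one h2j
    have hpow : (2 : ZMod n) ^ j = 1 ∨ (2 : ZMod n) ^ j = T := by
      rcases Nat.even_or_odd d with ⟨e, he⟩ | hdo
      · -- d even, d = e + e
        have hed : d = 2 * e := by omega
        have hej : e ∣ j := by
          obtain ⟨t, ht⟩ := hdvd
          refine ⟨t, ?_⟩
          have h2 : 2 * j = 2 * (e * t) := by rw [ht, hed]; ring
          omega
        obtain ⟨q, hq⟩ := hej
        have hTe : T = (2 : ZMod n) ^ e := by rw [hT, hed]; norm_num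
        have hsq : ((2 : ZMod n) ^ e) ^ 2 = 1 := by
          rw [← pow_mul, mul_comm, ← hed, hd]; exact pow_orderOf_eq_one _
        rcases Nat.even_or_odd q with ⟨k, hk⟩ | ⟨k, hk⟩
        · left
          have hk2 : q = 2 * k := by omega
          rw [hq, pow_mul, hk2, pow_mul, hsq, one_pow]
        · right
          rw [hq, pow_mul, hk, pow_succ, pow_mul, hsq, one_pow, one_mul, hTe]
      · left
        have : d ∣ j := (Nat.Coprime.dvd_of_dvd_mul_left
          (Nat.coprime_two_right.mpr hdo) hdvd)
        exact orderOf_dvd_iff_pow_eq_one.mp this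
    simp only [Finset.mem_insert, Finset.mem_singleton]
    rcases hx2 with h | h <;> rcases hpow with h' | h'
    · left; rw [h, h']
    · right; right; left; rw [h, h']
    · right; left; rw [h, h']
    · right; right; right; rw [h, h']
  have hinj : Function.Injective
      (fun y : {x : ZMod n // x * x = 1} =>
        (⟨y.1, key y.1 y.2⟩ : {z : ZMod n // z ∈ ({1, -1, T, -T} : Finset (ZMod n))})) := by
    intro y1 y2 h
    simpa [Subtype.ext_iff] using h
  have hle := Nat.card_le_card_of_injective _ hinj
  rw [Nat.card_eq_finsetCard] at hle
  refine hle.trans ?_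
  refine (Finset.card_insert_le _ _).trans (Nat.succ_le_succ ?_)
  refine (Finset.card_insert_le _ _).trans (Nat.succ_le_succ ?_)
  refine (Finset.card_insert_le _ _).trans (Nat.succ_le_succ ?_)
  exact (Finset.card_singleton _).le

/-- Every element of `O_FS` has at most two distinct prime factors. -/
theorem OFS_at_most_two_primes (n : ℕ) (hn : OFS n) : n.primeFactors.card ≤ 2 := by
  by_contra h
  push_neg at h
  have hlow := sqrt1_lower n hn.1
  have hup := OFS_sqrt_upper n hn
  have h8 : (8 : ℕ) ≤ 2 ^ n.primeFactors.card := by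
    calc (8 : ℕ) = 2 ^ 3 := by norm_num
      _ ≤ 2 ^ n.primeFactors.card := Nat.pow_le_pow_right (by norm_num) h
  omega
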